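/- arXiv:1903.01258 — 2 statements merged into one kernel-verified Lean document; each statement's English description precedes it below -/
import Mathlib

section
/- For every matrix A ∈ Matrix (Fin n) (Fin n) R and every index i ∈ Fin n, the formal partial derivative ∂_i is a derivation of the star product ⋆_A: ∂_i(f ⋆_A g) = (∂_i f) ⋆_A g + f ⋆_A (∂_i g) for all polynomials f, g in MvPolynomial (Fin n) R. -/
open MvPolynomial

/-- Iterated formal partial derivative `∂_{i 0} ⋯ ∂_{i (k-1)} f`. -/
noncomputable def pdMulti {n : ℕ} {R : Type*} [CommRing R] {k : ℕ}
    (i : Fin k → Fin n) (f : MvPolynomial (Fin n) R) : MvPolynomial (Fin n) R :=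
  (List.ofFn i).foldl (fun p a => pderiv a p) f

/-- The star product `f ⋆_A g` associated to a matrix `A`. -/
noncomputable def mstar {n : ℕ} {R : Type*} [CommRing R] [Algebra ℚ R]
    (A : Matrix (Fin n) (Fin n) R) (f g : MvPolynomial (Fin n) R) :
    MvPolynomial (Fin n) R :=
  ∑ᶠ k : ℕ, (k.factorial : ℚ)⁻¹ •
    ∑ i : Fin k → Fin n, ∑ j : Fin k → Fin n,
      (∏ r, A (i r) (j r)) • (pdMulti i f * pdMulti j g)

lemma pdMulti_succ {n : ℕ} {R : Type*} [CommRing R] {k : ℕ}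
    (i : Fin (k+1) → Fin n) (f : MvPolynomial (Fin n) R) :
    pdMulti i f = pdMulti (fun r => i r.succ) (pderiv (i 0) f) := by
  rw [pdMulti, List.ofFn_succ, List.foldl_cons]; rfl

lemma totalDegree_pderiv_le {n : ℕ} {R : Type*} [CommRing R] (i : Fin n)
    (f : MvPolynomial (Fin n) R) :
    (pderiv i f).totalDegree ≤ f.totalDegree - 1 := by
  classical
  conv_lhs => rw [f.as_sum]
  rw [map_sum]
  refine (totalDegree_finset_sum _ _).trans (Finset.sup_le ?_)
  intro s hs
  rw [pderiv_monomial]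
  by_cases h : s i = 0
  · simp [h]
  · refine (totalDegree_monomial_le _ _).trans ?_
    have hle : s.sum (fun _ e => e) ≤ f.totalDegree := le_totalDegree hs
    rw [Finsupp.sum_fintype _ _ (fun _ => rfl)]
    rw [Finsupp.sum_fintype _ _ (fun _ => rfl)] at hle
    rw [← Finset.sum_erase_add _ _ (Finset.mem_univ i)] at hle ⊢
    have h3 : ∀ x ∈ Finset.univ.erase i, ((s - Finsupp.single i 1 : Fin n →₀ ℕ)) x = s x := by
      intro x hx
      simp [Finsupp.tsub_apply, Finsupp.single_eq_of_ne (Finset.ne_of_mem_erase hx)]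
    simp only [id_eq]
    rw [Finset.sum_congr rfl h3, Finsupp.tsub_apply, Finsupp.single_eq_same]
    have h4 : (Finset.univ.erase i).sum ⇑s = ∑ x ∈ Finset.univ.erase i, s x := rfl
    omega

lemma pdMulti_zero {n : ℕ} {R : Type*} [CommRing R] {k : ℕ} (i : Fin k → Fin n) :
    pdMulti i (0 : MvPolynomial (Fin n) R) = 0 := by
  induction k with
  | zero => rfl
  | succ k ih => rw [pdMulti_succ, map_zero]; exact ih _

lemma pdMulti_eq_zero {n : ℕ} {R : Type*} [CommRing R] {k : ℕ} (i : Fin k → Fin n)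
    (f : MvPolynomial (Fin n) R) (h : f.totalDegree < k) : pdMulti i f = 0 := by
  induction k generalizing f with
  | zero => omega
  | succ k ih =>
    rw [pdMulti_succ]
    rcases Nat.eq_zero_or_pos k with hk | hk
    · subst hk
      have h0 : f.totalDegree = 0 := by omega
      have hv : i 0 ∉ f.vars := by
        rw [mem_vars]
        rintro ⟨m, hm, hmi⟩
        have h2 := (totalDegree_eq_zero_iff _ f).mp h0 m hm (i 0)
        rw [Finsupp.mem_support_iff] at hmi
        exact hmi h2
      rw [pderiv_eq_zero_of_notMem_vars hv]
      exact pdMulti_zero _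
    · exact ih _ _ (lt_of_le_of_lt (totalDegree_pderiv_le _ _) (by omega))

lemma pderiv_pderiv_comm {n : ℕ} {R : Type*} [CommRing R] (i j : Fin n)
    (f : MvPolynomial (Fin n) R) :
    pderiv i (pderiv j f) = pderiv j (pderiv i f) := by
  classical
  induction f using MvPolynomial.induction_on with
  | C a => simp
  | add p q hp hq => simp [hp, hq]
  | mul_X p k hp =>
    by_cases hik : k = i <;> by_cases hjk : k = j <;>
      simp [pderiv_mul, hp, hik, hjk, Pi.single_apply, apply_ite (pderiv i),
        apply_ite (pderiv j)] <;> ring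

lemma pdMulti_pderiv {n : ℕ} {R : Type*} [CommRing R] {k : ℕ} (a : Fin k → Fin n)
    (i : Fin n) (f : MvPolynomial (Fin n) R) :
    pderiv i (pdMulti a f) = pdMulti a (pderiv i f) := by
  induction k generalizing f with
  | zero => rfl
  | succ k ih =>
    rw [pdMulti_succ, pdMulti_succ, ih, pderiv_pderiv_comm]

lemma pderiv_qsmul {n : ℕ} {R : Type*} [CommRing R] [Algebra ℚ R] (i : Fin n)
    (q : ℚ) (f : MvPolynomial (Fin n) R) :
    pderiv i (q • f) = q • pderiv i f := by
  have h : q • f = C (algebraMap ℚ R q) * f := by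
    rw [algebra_compatible_smul R q f, smul_eq_C_mul]
  rw [h, pderiv_C_mul, algebra_compatible_smul R q (pderiv i f), smul_eq_C_mul]

/-- The `k`-th summand of the star product. -/
noncomputable def mstarT {n : ℕ} {R : Type*} [CommRing R] [Algebra ℚ R]
    (A : Matrix (Fin n) (Fin n) R) (f g : MvPolynomial (Fin n) R) (k : ℕ) :
    MvPolynomial (Fin n) R :=
  (k.factorial : ℚ)⁻¹ •
    ∑ i : Fin k → Fin n, ∑ j : Fin k → Fin n,
      (∏ r, A (i r) (j r)) • (pdMulti i f * pdMulti j g)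

lemma mstarT_eq_zero {n : ℕ} {R : Type*} [CommRing R] [Algebra ℚ R]
    (A : Matrix (Fin n) (Fin n) R) (f g : MvPolynomial (Fin n) R) {k : ℕ}
    (h : f.totalDegree < k) : mstarT A f g k = 0 := by
  unfold mstarT
  rw [Finset.sum_congr rfl fun i _ => Finset.sum_congr rfl fun j _ => by
    rw [pdMulti_eq_zero i f h, zero_mul, smul_zero]]
  simp

lemma mstar_eq_sum {n : ℕ} {R : Type*} [CommRing R] [Algebra ℚ R]
    (A : Matrix (Fin n) (Fin n) R) (f g : MvPolynomial (Fin n) R) {N : ℕ}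
    (h : f.totalDegree < N) :
    mstar A f g = ∑ k ∈ Finset.range N, mstarT A f g k := by
  rw [mstar]
  refine finsum_eq_finset_sum_of_support_subset _ ?_
  intro k hk
  simp only [Function.mem_support, Finset.coe_range, Set.mem_Iio] at hk ⊢
  by_contra hN
  exact hk (mstarT_eq_zero A f g (by omega))

lemma pderiv_mstarT {n : ℕ} {R : Type*} [CommRing R] [Algebra ℚ R]
    (A : Matrix (Fin n) (Fin n) R) (i : Fin n) (f g : MvPolynomial (Fin n) R) (k : ℕ) :
    pderiv i (mstarT A f g k) = mstarT A (pderiv i f) g k + mstarT A f (pderiv i g) k := by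
  unfold mstarT
  rw [pderiv_qsmul, ← smul_add, map_sum, ← Finset.sum_add_distrib]
  congr 1
  refine Finset.sum_congr rfl fun a _ => ?_
  rw [map_sum, ← Finset.sum_add_distrib]
  refine Finset.sum_congr rfl fun b _ => ?_
  rw [Derivation.map_smul, pderiv_mul, pdMulti_pderiv, pdMulti_pderiv, smul_add]

/-- Each formal partial derivative `∂_i` is a derivation of the star product `⋆_A`. -/
theorem pderiv_mstar {n : ℕ} {R : Type*} [CommRing R] [Algebra ℚ R]
    (A : Matrix (Fin n) (Fin n) R) (i : Fin n) (f g : MvPolynomial (Fin n) R) :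
    pderiv i (mstar A f g) = mstar A (pderiv i f) g + mstar A f (pderiv i g) := by
  set N := f.totalDegree + 1 with hN
  have h1 : f.totalDegree < N := by omega
  have h2 : (pderiv i f).totalDegree < N := by
    have := totalDegree_pderiv_le i f; omega
  rw [mstar_eq_sum A f g h1, mstar_eq_sum A (pderiv i f) g h2,
    mstar_eq_sum A f (pderiv i g) h1, map_sum, ← Finset.sum_add_distrib]
  exact Finset.sum_congr rfl fun k _ => pderiv_mstarT A i f g k
end

section
/- In R[X], for every b ∈ R and every polynomial p, one has T_b(X·p) = X·T_b(p) + b·T_b(p'). Consequently, the Wick powers W_k := T_{−a}(X^k) (for a fixed a ∈ R) satisfy W_0 = 1, W_1 = X, W_k' = k·W_{k−1} for all k ≥ 1, and the three-term recursion W_{k+1} = X·W_k − a·k·W_{k−1} for all k ≥ 1; in particular, for a = 1 the sequence (W_k) coincides with the sequence of probabilists' Hermite polynomials determined by He_0 = 1 and He_{k+1} = X·He_k − He_k'. -/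
open Polynomial

/-- The star product `f ⋆_a g = Σ_k (a^k/k!) f^{(k)} g^{(k)}` on `R[X]`. -/
noncomputable def ustar {R : Type*} [CommRing R] [Algebra ℚ R] (a : R)
    (f g : R[X]) : R[X] :=
  ∑ᶠ k : ℕ, (k.factorial : ℚ)⁻¹ •
    (a ^ k • ((⇑Polynomial.derivative)^[k] f * (⇑Polynomial.derivative)^[k] g))

/-- The operator `T_a f = Σ_m (a^m/(2^m m!)) f^{(2m)}` on `R[X]`. -/
noncomputable def uT {R : Type*} [CommRing R] [Algebra ℚ R] (a : R)
    (f : R[X]) : R[X] :=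
  ∑ᶠ m : ℕ, ((2 : ℚ) ^ m * m.factorial)⁻¹ •
    (a ^ m • (⇑Polynomial.derivative)^[2 * m] f)

section aux

variable {R : Type*} [CommRing R] [Algebra ℚ R]

lemma uT_eq_sum (a : R) (f : R[X]) {N : ℕ} (hN : f.natDegree < N) :
    uT a f = ∑ m ∈ Finset.range N, ((2 : ℚ) ^ m * m.factorial)⁻¹ •
      (a ^ m • (⇑Polynomial.derivative)^[2 * m] f) := by
  rw [uT]
  apply finsum_eq_finset_sum_of_support_subset
  intro m hm
  simp only [Function.mem_support] at hm
  simp only [Finset.coe_range, Set.mem_Iio]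
  by_contra h
  push_neg at h
  have h2 : f.natDegree < 2 * m := by omega
  rw [Polynomial.iterate_derivative_eq_zero h2] at hm
  simp at hm

lemma iter_deriv_X_mul (p : R[X]) (n : ℕ) :
    (⇑Polynomial.derivative)^[n] (X * p) =
      X * (⇑Polynomial.derivative)^[n] p + n • (⇑Polynomial.derivative)^[n - 1] p := by
  induction n with
  | zero => simp
  | succ n ih =>
      rw [Function.iterate_succ_apply', ih]
      cases n with
      | zero => simp [add_comm]
      | succ n =>
          rw [Function.iterate_succ_apply' derivative (n + 1) p]
          simp only [map_add, Polynomial.derivative_mul, Polynomial.derivative_X, one_mul,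
            map_nsmul, Nat.add_sub_cancel]
          rw [Function.iterate_succ_apply' derivative n p]
          module

lemma uT_X_mul (b : R) (p : R[X]) :
    uT b (X * p) = X * uT b p + b • uT b (Polynomial.derivative p) := by
  set N := p.natDegree + 1 with hNdef
  have hp : p.natDegree < N + 1 := by omega
  have hXp : (X * p).natDegree < N + 1 := by
    have := Polynomial.natDegree_mul_le (p := (X : R[X])) (q := p)
    have := Polynomial.natDegree_X_le (R := R)
    omega
  have hp' : (Polynomial.derivative p).natDegree < N := by
    have := Polynomial.natDegree_derivative_le p
    omega
  rw [uT_eq_sum b (X * p) hXp, uT_eq_sum b p hp, uT_eq_sum b (Polynomial.derivative p) hp']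
  have hsplit : ∀ m ∈ Finset.range (N + 1),
      ((2 : ℚ) ^ m * m.factorial)⁻¹ • (b ^ m • (⇑Polynomial.derivative)^[2 * m] (X * p)) =
      (X * (((2 : ℚ) ^ m * m.factorial)⁻¹ •
          (b ^ m • (⇑Polynomial.derivative)^[2 * m] p))) +
      ((2 : ℚ) ^ m * m.factorial)⁻¹ •
          (b ^ m • ((2 * m) • (⇑Polynomial.derivative)^[2 * m - 1] p)) := by
    intro m _
    rw [iter_deriv_X_mul, smul_add, smul_add]
    congr 1
    rw [mul_smul_comm, mul_smul_comm]
  rw [Finset.sum_congr rfl hsplit, Finset.sum_add_distrib, ← Finset.mul_sum]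
  congr 1
  rw [Finset.sum_range_succ']
  simp only [mul_zero, zero_smul, smul_zero, add_zero]
  rw [Finset.smul_sum]
  apply Finset.sum_congr rfl
  intro j _
  have h1 : 2 * (j + 1) - 1 = 2 * j + 1 := by omega
  rw [h1, Function.iterate_succ_apply]
  rw [smul_comm (b ^ (j + 1)) ((2 * (j + 1))) _]
  rw [← Nat.cast_smul_eq_nsmul ℚ (2 * (j + 1))]
  rw [smul_comm (((2 : ℚ) ^ (j + 1) * ((j + 1).factorial : ℚ))⁻¹) _, ← smul_assoc,
    smul_eq_mul]
  have hc : ((2 * (j + 1) : ℕ) : ℚ) * ((2 : ℚ) ^ (j + 1) * ((j + 1).factorial : ℚ))⁻¹ =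
      ((2 : ℚ) ^ j * (j.factorial : ℚ))⁻¹ := by
    rw [Nat.factorial_succ]
    have h1 : ((j.factorial : ℚ)) ≠ 0 := Nat.cast_ne_zero.2 j.factorial_ne_zero
    have h2 : ((2 : ℚ)) ^ j ≠ 0 := pow_ne_zero _ two_ne_zero
    push_cast
    field_simp
    ring
  rw [hc, pow_succ, mul_comm (b ^ j) b, mul_smul]
  rw [smul_comm _ b]

lemma derivative_uT (a : R) (f : R[X]) :
    Polynomial.derivative (uT a f) = uT a (Polynomial.derivative f) := by
  have hf : f.natDegree < f.natDegree + 1 := by omega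
  have hf' : (Polynomial.derivative f).natDegree < f.natDegree + 1 := by
    have := Polynomial.natDegree_derivative_le f
    omega
  rw [uT_eq_sum a f hf, uT_eq_sum a (Polynomial.derivative f) hf', map_sum]
  apply Finset.sum_congr rfl
  intro m _
  rw [Polynomial.derivative_smul, Polynomial.derivative_smul]
  congr 1
  congr 1
  rw [← Function.iterate_succ_apply' derivative (2 * m) f,
    ← Function.iterate_succ_apply derivative (2 * m) f]

lemma uT_C_mul (a : R) (r : R) (p : R[X]) :
    uT a (Polynomial.C r * p) = Polynomial.C r * uT a p := by
  have hp : p.natDegree < p.natDegree + 1 := by omega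
  have hCp : (Polynomial.C r * p).natDegree < p.natDegree + 1 := by
    have := Polynomial.natDegree_C_mul_le r p
    omega
  rw [uT_eq_sum a _ hCp, uT_eq_sum a p hp, Finset.mul_sum]
  apply Finset.sum_congr rfl
  intro m _
  rw [Polynomial.iterate_derivative_C_mul, mul_smul_comm, mul_smul_comm]

end aux

/-- `T_b(X·p) = X·T_b(p) + b·T_b(p')`; consequently the Wick powers
`W_k := T_{-a}(X^k)` satisfy `W_0 = 1`, `W_1 = X`, `W_k' = k·W_{k-1}` and the
three-term recursion `W_{k+1} = X·W_k − a·k·W_{k-1}`; for `a = 1` they coincide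
with the probabilists' Hermite polynomials determined by `He_0 = 1` and
`He_{k+1} = X·He_k − He_k'`. -/
theorem uT_mul_X_and_wick {R : Type*} [CommRing R] [Algebra ℚ R] :
    (∀ (b : R) (p : R[X]),
        uT b (X * p) = X * uT b p + b • uT b (Polynomial.derivative p)) ∧
    ∀ a : R,
      uT (-a) ((X : R[X]) ^ 0) = 1 ∧
      uT (-a) ((X : R[X]) ^ 1) = X ∧
      (∀ k : ℕ, 1 ≤ k →
        Polynomial.derivative (uT (-a) ((X : R[X]) ^ k)) =
          k • uT (-a) ((X : R[X]) ^ (k - 1))) ∧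
      (∀ k : ℕ, 1 ≤ k →
        uT (-a) ((X : R[X]) ^ (k + 1)) =
          X * uT (-a) ((X : R[X]) ^ k) - a • (k • uT (-a) ((X : R[X]) ^ (k - 1)))) ∧
      (a = 1 → ∀ He : ℕ → R[X], He 0 = 1 →
        (∀ k : ℕ, He (k + 1) = X * He k - Polynomial.derivative (He k)) →
        ∀ k : ℕ, uT (-a) ((X : R[X]) ^ k) = He k) := by
  refine ⟨fun b p => uT_X_mul b p, fun a => ?_⟩
  have hW0 : uT (-a) ((X : R[X]) ^ 0) = 1 := by
    rw [pow_zero, uT_eq_sum (-a) (1 : R[X]) (N := 1) (by simp)]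
    simp
  have hW1 : uT (-a) ((X : R[X]) ^ 1) = X := by
    rw [pow_one, uT_eq_sum (-a) (X : R[X]) (N := 2)
      (by have := Polynomial.natDegree_X_le (R := R); omega)]
    rw [Finset.sum_range_succ, Finset.sum_range_one]
    simp
  have hderiv : ∀ k : ℕ, 1 ≤ k →
      Polynomial.derivative (uT (-a) ((X : R[X]) ^ k)) =
        k • uT (-a) ((X : R[X]) ^ (k - 1)) := by
    intro k hk
    rw [derivative_uT, Polynomial.derivative_X_pow, uT_C_mul]
    rw [nsmul_eq_mul, Polynomial.C_eq_natCast]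
  refine ⟨hW0, hW1, hderiv, ?_, ?_⟩
  · intro k hk
    have hXX : (X : R[X]) ^ (k + 1) = X * X ^ k := by
      rw [pow_succ, mul_comm]
    rw [hXX, uT_X_mul, ← derivative_uT, hderiv k hk, neg_smul, ← sub_eq_add_neg]
  · intro ha He hHe0 hHerec k
    subst ha
    induction k with
    | zero => rw [pow_zero] at hW0 ⊢; rw [hW0, hHe0]
    | succ k ih =>
        have hXX : (X : R[X]) ^ (k + 1) = X * X ^ k := by
          rw [pow_succ, mul_comm]
        rw [hXX, uT_X_mul, ← derivative_uT, hHerec k, ih, neg_smul, one_smul,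
          ← sub_eq_add_neg]
end
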